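/- Let α ∈ (0,1], λ > 0, n ∈ ℕ, and define y(x) = C_n^{(λ)}(x^α) where C_n^{(λ)} is the classical Gegenbauer polynomial. Then for x > 0, y satisfies the conformable Gegenbauer equation (1 - x^{2α})·D^α(D^α y)(x) - α(2λ+1)·x^α·D^α y(x) + α² n(n+2λ)·y(x) = 0. -/

import Mathlib

open Real Filter Finset

/-- Conformable derivative of order `a` at `x`: `D^a f (x) = x^(1-a) * f'(x)`. -/
noncomputable def confDeriv (a : ℝ) (f : ℝ → ℝ) (x : ℝ) : ℝ := x ^ (1 - a) * deriv f x

/-- Gegenbauer polynomial `C_n^{(l)}(z)` as an explicit finite sum. -/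
noncomputable def gegenbauer (n : ℕ) (l : ℝ) (z : ℝ) : ℝ :=
  ∑ k ∈ Finset.range (n / 2 + 1),
    (-1 : ℝ) ^ k * Real.Gamma ((n - k : ℕ) + l) /
      (Real.Gamma l * (k.factorial : ℝ) * ((n - 2 * k).factorial : ℝ)) * (2 * z) ^ (n - 2 * k)


noncomputable def cC (n : ℕ) (l : ℝ) (k : ℕ) : ℝ :=
  (-1 : ℝ) ^ k * Real.Gamma ((n - k : ℕ) + l) /
      (Real.Gamma l * (k.factorial : ℝ) * ((n - 2 * k).factorial : ℝ))

noncomputable def G0 (n : ℕ) (l : ℝ) (z : ℝ) : ℝ :=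
  ∑ k ∈ Finset.range (n / 2 + 1), cC n l k * (2 * z) ^ (n - 2 * k)

noncomputable def G1 (n : ℕ) (l : ℝ) (z : ℝ) : ℝ :=
  ∑ k ∈ Finset.range (n / 2 + 1),
    (cC n l k * ((n - 2 * k : ℕ) : ℝ) * 2) * (2 * z) ^ (n - 2 * k - 1)

noncomputable def G2 (n : ℕ) (l : ℝ) (z : ℝ) : ℝ :=
  ∑ k ∈ Finset.range (n / 2 + 1),
    (cC n l k * ((n - 2 * k : ℕ) : ℝ) * 2) *
      (((n - 2 * k - 1 : ℕ) : ℝ) * (2 * z) ^ (n - 2 * k - 1 - 1) * 2)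

lemma hd0 (n : ℕ) (l : ℝ) (z : ℝ) : HasDerivAt (G0 n l) (G1 n l z) z := by
  have h : HasDerivAt (fun z : ℝ => ∑ k ∈ Finset.range (n / 2 + 1),
      cC n l k * (2 * z) ^ (n - 2 * k))
      (∑ k ∈ Finset.range (n / 2 + 1),
        cC n l k * (((n - 2 * k : ℕ) : ℝ) * (2 * z) ^ (n - 2 * k - 1) * 2)) z := by
    apply HasDerivAt.fun_sum
    intro k _
    simpa using (((hasDerivAt_id z).const_mul 2).pow (n - 2 * k)).const_mul (cC n l k)
  have : G1 n l z = ∑ k ∈ Finset.range (n / 2 + 1),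
        cC n l k * (((n - 2 * k : ℕ) : ℝ) * (2 * z) ^ (n - 2 * k - 1) * 2) := by
    unfold G1; exact Finset.sum_congr rfl fun k _ => by ring
  rw [show G0 n l = (fun z : ℝ => ∑ k ∈ Finset.range (n / 2 + 1),
      cC n l k * (2 * z) ^ (n - 2 * k)) from rfl, this]
  exact h

lemma hd1 (n : ℕ) (l : ℝ) (z : ℝ) : HasDerivAt (G1 n l) (G2 n l z) z := by
  apply HasDerivAt.fun_sum
  intro k _
  simpa using (((hasDerivAt_id z).const_mul 2).pow (n - 2 * k - 1)).const_mul
    (cC n l k * ((n - 2 * k : ℕ) : ℝ) * 2)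

lemma cC_rec (n : ℕ) (l : ℝ) (hl : 0 < l) (k : ℕ) (hk : 2 * (k + 1) ≤ n) :
    4 * cC n l (k + 1) * ((k : ℝ) + 1) * ((n : ℝ) - (k + 1) + l)
      = -(4 * cC n l k * ((n : ℝ) - 2 * k) * ((n : ℝ) - 2 * k - 1)) := by
  obtain ⟨j, rfl⟩ : ∃ j, n = j + 2 * (k + 1) := ⟨n - 2 * (k + 1), by omega⟩
  have e1 : j + 2 * (k + 1) - (k + 1) = j + k + 1 := by omega
  have e2 : j + 2 * (k + 1) - k = j + k + 2 := by omega
  have e3 : j + 2 * (k + 1) - 2 * (k + 1) = j := by omega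
  have e4 : j + 2 * (k + 1) - 2 * k = j + 2 := by omega
  unfold cC
  rw [e1, e2, e3, e4]
  have hΓ : Real.Gamma ((j + k + 2 : ℕ) + l)
      = (((j + k + 1 : ℕ) : ℝ) + l) * Real.Gamma ((j + k + 1 : ℕ) + l) := by
    have : ((j + k + 2 : ℕ) : ℝ) + l = (((j + k + 1 : ℕ) : ℝ) + l) + 1 := by push_cast; ring
    rw [this, Real.Gamma_add_one]
    positivity
  rw [hΓ]
  have hΓl : Real.Gamma l ≠ 0 := (Real.Gamma_pos_of_pos hl).ne'
  have h1 : ((k + 1).factorial : ℝ) = (k + 1) * (k.factorial : ℝ) := by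
    rw [Nat.factorial_succ]; push_cast; ring
  have h2 : ((j + 2).factorial : ℝ) = (j + 2) * (j + 1) * (j.factorial : ℝ) := by
    rw [show j + 2 = (j + 1) + 1 from rfl, Nat.factorial_succ, Nat.factorial_succ]
    push_cast; ring
  rw [h1, h2, pow_succ]
  have hkf : (k.factorial : ℝ) ≠ 0 := by positivity
  have hjf : (j.factorial : ℝ) ≠ 0 := by positivity
  field_simp
  push_cast
  ring

lemma perk (n : ℕ) (l : ℝ) (u : ℝ) (k : ℕ) (hk : 2 * k ≤ n) :
    (1 - u ^ 2) * ((cC n l k * ((n - 2 * k : ℕ) : ℝ) * 2) *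
        (((n - 2 * k - 1 : ℕ) : ℝ) * (2 * u) ^ (n - 2 * k - 1 - 1) * 2))
      - (2 * l + 1) * u * ((cC n l k * ((n - 2 * k : ℕ) : ℝ) * 2) * (2 * u) ^ (n - 2 * k - 1))
      + (n : ℝ) * ((n : ℝ) + 2 * l) * (cC n l k * (2 * u) ^ (n - 2 * k))
    = (4 * cC n l k * ((n : ℝ) - 2 * k) * ((n : ℝ) - 2 * k - 1)) * (2 * u) ^ (n - 2 * (k + 1))
      + (4 * cC n l k * (k : ℝ) * ((n : ℝ) - k + l)) * (2 * u) ^ (n - 2 * k) := by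
  obtain ⟨m, rfl⟩ : ∃ m, n = m + 2 * k := ⟨n - 2 * k, by omega⟩
  have e0 : m + 2 * k - 2 * k = m := by omega
  rw [e0]
  have hn : ((m + 2 * k : ℕ) : ℝ) = (m : ℝ) + 2 * k := by push_cast; ring
  rw [hn]
  match m with
  | 0 =>
    have : 0 + 2 * k - 2 * (k + 1) = 0 := by omega
    rw [this]
    push_cast
    ring
  | 1 =>
    have : 1 + 2 * k - 2 * (k + 1) = 0 := by omega
    rw [this]
    push_cast
    ring
  | (p + 2) =>
    have : p + 2 + 2 * k - 2 * (k + 1) = p := by omega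
    rw [this]
    push_cast
    rw [pow_succ ((2:ℝ)*u) (p+1), pow_succ ((2:ℝ)*u) p]
    ring

lemma keyODE (n : ℕ) (l : ℝ) (hl : 0 < l) (u : ℝ) :
    (1 - u ^ 2) * G2 n l u - (2 * l + 1) * u * G1 n l u
      + (n : ℝ) * ((n : ℝ) + 2 * l) * G0 n l u = 0 := by
  unfold G0 G1 G2
  rw [Finset.mul_sum, Finset.mul_sum, Finset.mul_sum, ← Finset.sum_sub_distrib,
    ← Finset.sum_add_distrib]
  have step : ∀ k ∈ Finset.range (n / 2 + 1),
      (1 - u ^ 2) * ((cC n l k * ((n - 2 * k : ℕ) : ℝ) * 2) *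
          (((n - 2 * k - 1 : ℕ) : ℝ) * (2 * u) ^ (n - 2 * k - 1 - 1) * 2))
        - (2 * l + 1) * u * ((cC n l k * ((n - 2 * k : ℕ) : ℝ) * 2) * (2 * u) ^ (n - 2 * k - 1))
        + (n : ℝ) * ((n : ℝ) + 2 * l) * (cC n l k * (2 * u) ^ (n - 2 * k))
      = (4 * cC n l k * ((n : ℝ) - 2 * k) * ((n : ℝ) - 2 * k - 1)) * (2 * u) ^ (n - 2 * (k + 1))
        + (4 * cC n l k * (k : ℝ) * ((n : ℝ) - k + l)) * (2 * u) ^ (n - 2 * k) := by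
    intro k hk
    apply perk
    have := Finset.mem_range.mp hk
    omega
  rw [Finset.sum_congr rfl step, Finset.sum_add_distrib]
  -- sum of A-terms
  rw [Finset.sum_range_succ, Finset.sum_range_succ']
  have hA : (4 * cC n l (n / 2) * ((n : ℝ) - 2 * ((n / 2 : ℕ) : ℝ))
      * ((n : ℝ) - 2 * ((n / 2 : ℕ) : ℝ) - 1))
      * (2 * u) ^ (n - 2 * (n / 2 + 1)) = 0 := by
    have h : (n : ℝ) - 2 * ((n / 2 : ℕ) : ℝ) = ((n % 2 : ℕ) : ℝ) := by
      have := Nat.div_add_mod n 2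
      have : (n : ℝ) = 2 * ((n / 2 : ℕ) : ℝ) + ((n % 2 : ℕ) : ℝ) := by
        exact_mod_cast congrArg (Nat.cast (R := ℝ)) this.symm
      linarith
    rcases Nat.mod_two_eq_zero_or_one n with h2 | h2 <;> rw [h, h2] <;> norm_num
  have hB : (4 * cC n l 0 * ((0 : ℕ) : ℝ) * ((n : ℝ) - ((0 : ℕ) : ℝ) + l)) * (2 * u) ^ (n - 2 * 0) = 0 := by
    norm_num
  rw [hA, hB]
  rw [add_zero, add_zero, ← Finset.sum_add_distrib]
  apply Finset.sum_eq_zero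
  intro k hk
  have hk2 : 2 * (k + 1) ≤ n := by
    have := Finset.mem_range.mp hk
    omega
  have := cC_rec n l hl k hk2
  have hcast : ((k : ℝ) + 1) = ((k + 1 : ℕ) : ℝ) := by push_cast; ring
  calc (4 * cC n l k * ((n : ℝ) - 2 * k) * ((n : ℝ) - 2 * k - 1)) * (2 * u) ^ (n - 2 * (k + 1))
        + (4 * cC n l (k + 1) * ((k + 1 : ℕ) : ℝ) * ((n : ℝ) - ((k + 1 : ℕ) : ℝ) + l))
          * (2 * u) ^ (n - 2 * (k + 1))
      = ((4 * cC n l k * ((n : ℝ) - 2 * k) * ((n : ℝ) - 2 * k - 1))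
          + 4 * cC n l (k + 1) * ((k : ℝ) + 1) * ((n : ℝ) - ((k : ℝ) + 1) + l))
          * (2 * u) ^ (n - 2 * (k + 1)) := by push_cast; ring
    _ = 0 := by rw [this]; ring

lemma gegen_eq (n : ℕ) (l : ℝ) : (fun z => gegenbauer n l z) = G0 n l := rfl

lemma cd1 (α : ℝ) (hα0 : 0 < α) (n : ℕ) (l : ℝ) {x : ℝ} (hx : 0 < x) :
    confDeriv α (fun t : ℝ => gegenbauer n l (t ^ α)) x = α * G1 n l (x ^ α) := by
  have hr : HasDerivAt (fun t : ℝ => t ^ α) (α * x ^ (α - 1)) x :=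
    Real.hasDerivAt_rpow_const (Or.inl hx.ne')
  have h : HasDerivAt (fun t : ℝ => gegenbauer n l (t ^ α))
      (G1 n l (x ^ α) * (α * x ^ (α - 1))) x := by
    rw [show (fun t : ℝ => gegenbauer n l (t ^ α)) = (G0 n l) ∘ (fun t : ℝ => t ^ α) from rfl]
    exact (hd0 n l (x ^ α)).comp x hr
  unfold confDeriv
  rw [h.deriv]
  have hxx : x ^ (1 - α) * x ^ (α - 1) = 1 := by
    rw [← Real.rpow_add hx]; norm_num
  calc x ^ (1 - α) * (G1 n l (x ^ α) * (α * x ^ (α - 1)))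
      = (x ^ (1 - α) * x ^ (α - 1)) * (α * G1 n l (x ^ α)) := by ring
    _ = α * G1 n l (x ^ α) := by rw [hxx]; ring

lemma cd2 (α : ℝ) (hα0 : 0 < α) (n : ℕ) (l : ℝ) {x : ℝ} (hx : 0 < x) :
    confDeriv α (confDeriv α (fun t : ℝ => gegenbauer n l (t ^ α))) x
      = α ^ 2 * G2 n l (x ^ α) := by
  have hev : (confDeriv α (fun t : ℝ => gegenbauer n l (t ^ α)))
      =ᶠ[nhds x] (fun t : ℝ => α * G1 n l (t ^ α)) := by
    filter_upwards [Ioi_mem_nhds hx] with t ht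
    exact cd1 α hα0 n l ht
  have hr : HasDerivAt (fun t : ℝ => t ^ α) (α * x ^ (α - 1)) x :=
    Real.hasDerivAt_rpow_const (Or.inl hx.ne')
  have h : HasDerivAt (fun t : ℝ => α * G1 n l (t ^ α))
      (α * (G2 n l (x ^ α) * (α * x ^ (α - 1)))) x := by
    have := ((hd1 n l (x ^ α)).comp x hr).const_mul α
    simpa using this
  show x ^ (1 - α) * deriv (confDeriv α (fun t : ℝ => gegenbauer n l (t ^ α))) x
      = α ^ 2 * G2 n l (x ^ α)
  rw [hev.deriv_eq, h.deriv]
  have hxx : x ^ (1 - α) * x ^ (α - 1) = 1 := by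
    rw [← Real.rpow_add hx]; norm_num
  calc x ^ (1 - α) * (α * (G2 n l (x ^ α) * (α * x ^ (α - 1))))
      = (x ^ (1 - α) * x ^ (α - 1)) * (α ^ 2 * G2 n l (x ^ α)) := by ring
    _ = α ^ 2 * G2 n l (x ^ α) := by rw [hxx]; ring

/-- `y(x) = C_n^{(λ)}(x^α)` solves the conformable Gegenbauer equation. -/
theorem stmt_2 (α : ℝ) (hα : α ∈ Set.Ioc (0 : ℝ) 1) (l : ℝ) (hl : 0 < l) (n : ℕ)
    (x : ℝ) (hx : 0 < x) :
    (1 - x ^ (2 * α)) * confDeriv α (confDeriv α (fun t : ℝ => gegenbauer n l (t ^ α))) x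
      - α * (2 * l + 1) * x ^ α * confDeriv α (fun t : ℝ => gegenbauer n l (t ^ α)) x
      + α ^ 2 * n * (n + 2 * l) * gegenbauer n l (x ^ α) = 0 := by
  obtain ⟨hα0, hα1⟩ := hα
  rw [cd1 α hα0 n l hx, cd2 α hα0 n l hx]
  have hsq : x ^ (2 * α) = (x ^ α) ^ 2 := by
    rw [two_mul, Real.rpow_add hx, sq]
  have hG : gegenbauer n l (x ^ α) = G0 n l (x ^ α) := rfl
  rw [hsq, hG]
  linear_combination (α ^ 2) * keyODE n l hl (x ^ α)
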